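/- Let n ≥ 1 and m ≥ 1, let A be an n×n real matrix and C an m×n real matrix, and suppose the pair (C,A) is observable, i.e., N(C,A) = {x ∈ ℝⁿ : C·A^k·x = 0 for all 0 ≤ k ≤ n−1} = {0}. Then for every τ > 0, the observability Gramian Γ(τ) = ∫₀^τ (exp(tA))ᵀ · Cᵀ · C · exp(tA) dt is a positive definite (in particular invertible) symmetric n×n matrix. -/

import Mathlib

open Matrix

open scoped MeasureTheory

set_option maxHeartbeats 1000000

section Aux

variable {n m : ℕ}

/-- The continuous linear map `M ↦ ((B * M) *ᵥ x) i`. -/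
noncomputable def auxCLM (B : Matrix (Fin m) (Fin n) ℝ) (x : Fin n → ℝ) (i : Fin m) :
    Matrix (Fin n) (Fin n) ℝ →L[ℝ] ℝ :=
  LinearMap.toContinuousLinearMap
    { toFun := fun M => ((B * M) *ᵥ x) i
      map_add' := by
        intro M N
        simp [Matrix.mul_add, Matrix.add_mulVec]
      map_smul' := by
        intro c M
        simp [Matrix.mul_smul, Matrix.smul_mulVec] }

@[simp] lemma auxCLM_apply (B : Matrix (Fin m) (Fin n) ℝ) (x : Fin n → ℝ) (i : Fin m)
    (M : Matrix (Fin n) (Fin n) ℝ) : auxCLM B x i M = ((B * M) *ᵥ x) i := rfl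

end Aux

/-- For an observable pair `(C, A)` and any `τ > 0`, the observability Gramian
`Γ(τ) = ∫₀^τ exp(tA)ᵀ Cᵀ C exp(tA) dt` (computed entrywise) is positive definite,
in particular its determinant is a unit (it is invertible); positive definiteness
includes symmetry (Hermitian over ℝ). -/
theorem stmt8 (n m : ℕ) (hn : 1 ≤ n) (hm : 1 ≤ m)
    (A : Matrix (Fin n) (Fin n) ℝ) (C : Matrix (Fin m) (Fin n) ℝ)
    (hobs : ∀ x : Fin n → ℝ, (∀ k : ℕ, k ≤ n - 1 → (C * A ^ k) *ᵥ x = 0) → x = 0)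
    (τ : ℝ) (hτ : 0 < τ)
    (Γ : Matrix (Fin n) (Fin n) ℝ)
    (hΓ : Γ = Matrix.of fun i j => ∫ t in (0 : ℝ)..τ,
      ((NormedSpace.exp (t • A))ᵀ * Cᵀ * C * NormedSpace.exp (t • A)) i j) :
    Γ.PosDef ∧ IsUnit Γ.det := by
  classical
  set E : ℝ → Matrix (Fin n) (Fin n) ℝ := fun t => NormedSpace.exp (t • A) with hEdef
  letI : NormedRing (Matrix (Fin n) (Fin n) ℝ) := Matrix.linftyOpNormedRing
  letI : NormedAlgebra ℝ (Matrix (Fin n) (Fin n) ℝ) := Matrix.linftyOpNormedAlgebra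
  letI : NormedAlgebra ℚ (Matrix (Fin n) (Fin n) ℝ) := Matrix.linftyOpNormedAlgebra
  haveI : CompleteSpace (Matrix (Fin n) (Fin n) ℝ) := FiniteDimensional.complete ℝ _
  have hEcont : Continuous E :=
    NormedSpace.exp_continuous.comp (continuous_id.smul continuous_const)
  set M : ℝ → Matrix (Fin n) (Fin n) ℝ := fun t => (E t)ᵀ * Cᵀ * C * E t with hMdef
  have hΓ' : Γ = Matrix.of fun i j => ∫ t in (0 : ℝ)..τ, M t i j := by
    rw [hΓ]
  have hMcont : Continuous M :=
    ((hEcont.matrix_transpose.matrix_mul continuous_const).matrix_mul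
      continuous_const).matrix_mul hEcont
  have hint : ∀ i j, IntervalIntegrable (fun t => M t i j) MeasureTheory.volume 0 τ :=
    fun i j => (hMcont.matrix_elem i j).intervalIntegrable 0 τ
  -- the quadratic form of `M t`
  have hMq : ∀ (t : ℝ) (x : Fin n → ℝ),
      x ⬝ᵥ (M t *ᵥ x) = ((C * E t) *ᵥ x) ⬝ᵥ ((C * E t) *ᵥ x) := by
    intro t x
    have hMt : M t = (C * E t)ᵀ * (C * E t) := by
      simp [hMdef, Matrix.transpose_mul, Matrix.mul_assoc]
    rw [hMt, ← Matrix.mulVec_mulVec, Matrix.dotProduct_mulVec, Matrix.vecMul_transpose]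
  have hMq_nonneg : ∀ (t : ℝ) (x : Fin n → ℝ), 0 ≤ x ⬝ᵥ (M t *ᵥ x) := by
    intro t x
    rw [hMq]
    exact Finset.sum_nonneg fun l _ => mul_self_nonneg _
  -- the quadratic form of `Γ` as an integral
  have hquad : ∀ x : Fin n → ℝ,
      x ⬝ᵥ (Γ *ᵥ x) = ∫ t in (0 : ℝ)..τ, x ⬝ᵥ (M t *ᵥ x) := by
    intro x
    have h1 : (fun t => x ⬝ᵥ (M t *ᵥ x))
        = fun t => ∑ i, ∑ j, x i * M t i j * x j := by
      funext t
      simp [dotProduct, Matrix.mulVec, Finset.mul_sum, mul_assoc, mul_comm, mul_left_comm]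
    rw [h1, intervalIntegral.integral_finset_sum]
    · have h2 : ∀ i : Fin n, (∫ t in (0:ℝ)..τ, ∑ j, x i * M t i j * x j)
          = ∑ j, x i * (∫ t in (0:ℝ)..τ, M t i j) * x j := by
        intro i
        rw [intervalIntegral.integral_finset_sum]
        · refine Finset.sum_congr rfl fun j _ => ?_
          rw [show (fun t => x i * M t i j * x j) = fun t => (x i * x j) * M t i j by
            funext t; ring]
          rw [intervalIntegral.integral_const_mul]
          ring
        · intro j _
          exact (((hint i j).const_mul (x i)).mul_const (x j))
      calc x ⬝ᵥ (Γ *ᵥ x) = ∑ i, ∑ j, x i * Γ i j * x j := by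
            simp [dotProduct, Matrix.mulVec, Finset.mul_sum, mul_assoc]
        _ = ∑ i, ∫ t in (0:ℝ)..τ, ∑ j, x i * M t i j * x j := by
            refine Finset.sum_congr rfl fun i _ => ?_
            rw [h2 i]
            refine Finset.sum_congr rfl fun j _ => ?_
            rw [hΓ']
            rfl
    · intro i _
      exact (continuous_finset_sum _ fun j _ =>
        (continuous_const.mul (hMcont.matrix_elem i j)).mul
          continuous_const).intervalIntegrable 0 τ
  -- Key positivity
  have hpos : ∀ x : Fin n → ℝ, x ≠ 0 → 0 < x ⬝ᵥ (Γ *ᵥ x) := by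
    intro x hx
    rw [hquad x]
    set q : ℝ → ℝ := fun t => x ⬝ᵥ (M t *ᵥ x) with hqdef
    have hqcont : Continuous q := by
      have : q = fun t => ∑ i, ∑ j, x i * M t i j * x j := by
        funext t
        simp [hqdef, dotProduct, Matrix.mulVec, Finset.mul_sum, mul_assoc, mul_comm,
          mul_left_comm]
      rw [this]
      exact continuous_finset_sum _ fun i _ => continuous_finset_sum _ fun j _ =>
        ((continuous_const.mul (hMcont.matrix_elem i j)).mul continuous_const)
    have hqint : IntervalIntegrable q MeasureTheory.volume 0 τ :=
      hqcont.intervalIntegrable 0 τ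
    have hqnonneg : ∀ t, 0 ≤ q t := fun t => hMq_nonneg t x
    by_contra hcon
    push_neg at hcon
    have hzero : ∫ t in (0:ℝ)..τ, q t = 0 :=
      le_antisymm hcon
        (intervalIntegral.integral_nonneg hτ.le fun t _ => hqnonneg t)
    -- q vanishes on `Ioo 0 τ`
    have hae : q =ᵐ[MeasureTheory.volume.restrict (Set.Ioc 0 τ)] 0 := by
      rw [← intervalIntegral.integral_eq_zero_iff_of_le_of_nonneg_ae hτ.le
        (Filter.Eventually.of_forall fun t => hqnonneg t) hqint]
      exact hzero
    have hq0 : ∀ t ∈ Set.Ioo (0:ℝ) τ, q t = 0 := by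
      intro t₀ ht₀
      by_contra hne
      have hqpos : 0 < q t₀ := lt_of_le_of_ne (hqnonneg t₀) (Ne.symm hne)
      set U : Set ℝ := q ⁻¹' Set.Ioi (q t₀ / 2) ∩ Set.Ioo 0 τ with hUdef
      have hUopen : IsOpen U :=
        (isOpen_Ioi.preimage hqcont).inter isOpen_Ioo
      have hUmem : t₀ ∈ U := ⟨by simpa using half_lt_self hqpos, ht₀⟩
      have hUpos : 0 < MeasureTheory.volume U :=
        hUopen.measure_pos _ ⟨t₀, hUmem⟩
      have hnull : MeasureTheory.volume ({t | q t ≠ 0} ∩ Set.Ioc 0 τ) = 0 := by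
        have := MeasureTheory.ae_iff.mp hae
        rwa [MeasureTheory.Measure.restrict_apply] at this
        · exact (isOpen_compl_iff.mpr (isClosed_singleton.preimage hqcont)).measurableSet
      have hsub : U ⊆ {t | q t ≠ 0} ∩ Set.Ioc 0 τ := by
        rintro t ⟨h1, h2⟩
        refine ⟨?_, Set.Ioo_subset_Ioc_self h2⟩
        have : 0 < q t := lt_of_le_of_lt (by positivity) h1
        exact this.ne'
      exact absurd (MeasureTheory.measure_mono_null hsub hnull) hUpos.ne'
    -- hence `C exp(tA) x = 0` on `Ioo 0 τ`
    have hg0 : ∀ t ∈ Set.Ioo (0:ℝ) τ, (C * E t) *ᵥ x = 0 := by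
      intro t ht
      have h : ((C * E t) *ᵥ x) ⬝ᵥ ((C * E t) *ᵥ x) = 0 := by
        rw [← hMq]; exact hq0 t ht
      funext l
      have hsum : ∑ l, ((C * E t) *ᵥ x) l * ((C * E t) *ᵥ x) l = 0 := h
      have := Finset.sum_eq_zero_iff_of_nonneg
        (fun l _ => mul_self_nonneg (((C * E t) *ᵥ x) l)) |>.mp hsum l (Finset.mem_univ l)
      have := mul_self_eq_zero.mp this
      simpa using this
    -- by induction, `C A^k exp(tA) x = 0` on `Ioo 0 τ`
    have hk : ∀ k : ℕ, ∀ t ∈ Set.Ioo (0:ℝ) τ, (C * A ^ k * E t) *ᵥ x = 0 := by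
      intro k
      induction k with
      | zero => intro t ht; simpa using hg0 t ht
      | succ k ih =>
        intro t₀ ht₀
        funext i
        have hD : HasDerivAt E (E t₀ * A) t₀ := hasDerivAt_exp_smul_const A t₀
        have hφD : HasDerivAt (fun t => auxCLM (C * A ^ k) x i (E t))
            (auxCLM (C * A ^ k) x i (E t₀ * A)) t₀ :=
          ((auxCLM (C * A ^ k) x i).hasFDerivAt.comp_hasDerivAt t₀ hD)
        have hev : (fun t => auxCLM (C * A ^ k) x i (E t)) =ᶠ[nhds t₀] fun _ => 0 := by
          filter_upwards [isOpen_Ioo.mem_nhds ht₀] with t ht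
          simp [auxCLM_apply, ih t ht]
        have hφD0 : HasDerivAt (fun t => auxCLM (C * A ^ k) x i (E t)) 0 t₀ :=
          (hasDerivAt_const t₀ (0:ℝ)).congr_of_eventuallyEq hev
        have huniq : auxCLM (C * A ^ k) x i (E t₀ * A) = 0 := hφD.unique hφD0
        have hcomm : A * E t₀ = E t₀ * A := by
          have : Commute A (t₀ • A) := (Commute.refl A).smul_right t₀
          exact (this.exp_right).eq
        have hmat : C * A ^ (k+1) * E t₀ = C * A ^ k * (E t₀ * A) := by
          rw [pow_succ, ← Matrix.mul_assoc C (A ^ k) A,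
            Matrix.mul_assoc (C * A ^ k) A (E t₀), hcomm]
        calc ((C * A ^ (k+1) * E t₀) *ᵥ x) i
            = auxCLM (C * A ^ k) x i (E t₀ * A) := by rw [hmat]; rfl
          _ = 0 := huniq
    -- conclude `x = 0`, contradiction
    have ht₀ : τ / 2 ∈ Set.Ioo (0:ℝ) τ := ⟨by positivity, by linarith⟩
    set y : Fin n → ℝ := E (τ / 2) *ᵥ x with hydef
    have hy : y = 0 := by
      apply hobs
      intro k _
      rw [hydef, Matrix.mulVec_mulVec]
      exact hk k (τ/2) ht₀
    have hinv : NormedSpace.exp (-((τ/2) • A)) * E (τ/2) = 1 := by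
      rw [hEdef]; beta_reduce
      erw [← NormedSpace.exp_add_of_commute (Commute.refl ((τ/2) • A)).neg_left,
        neg_add_cancel]
      exact NormedSpace.exp_zero
    have : x = 0 := by
      have h2 := congrArg (fun v => NormedSpace.exp (-((τ/2) • A)) *ᵥ v) hy
      simpa [hydef, Matrix.mulVec_mulVec, hinv] using h2
    exact hx this
  -- Hermitian
  have hherm : Γ.IsHermitian := by
    rw [Matrix.IsHermitian]
    ext i j
    have hsymm : ∀ t : ℝ, M t j i = M t i j := by
      intro t
      have : (M t)ᵀ = M t := by
        simp [hMdef, Matrix.transpose_mul, Matrix.mul_assoc]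
      calc M t j i = (M t)ᵀ i j := rfl
        _ = M t i j := by rw [this]
    rw [hΓ']
    simp only [Matrix.conjTranspose_apply, Matrix.of_apply, star_trivial]
    exact intervalIntegral.integral_congr fun t _ => hsymm t
  have hPD : Γ.PosDef := by
    refine Matrix.PosDef.of_dotProduct_mulVec_pos hherm fun x hx => ?_
    simpa using hpos x hx
  exact ⟨hPD, isUnit_iff_ne_zero.mpr hPD.det_pos.ne'⟩
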